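/- (Lemma 4.) Let b, c be even integers with 0 ≤ c < b. Let D be the (b-c)×(b-c) matrix over ℚ with rows and columns indexed by c ≤ i,j < b, whose (i,j) entry equals C(c - b/2 - 1/2, 2c-1-j) if i = c, and C(c - b/2 + 1/2, i-j+c) if c < i < b. Then det D = 0. -/

import Mathlib

open Finset

/-- Generalized binomial coefficient `C(x,k)`. -/
def gbinom (x : ℚ) (k : ℤ) : ℚ :=
  if 0 ≤ k then (∏ m ∈ Finset.range k.toNat, (x - m)) / (k.toNat.factorial : ℚ) else 0

/-- Shifted factorial `(a)_k` with integer index. -/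
def poch (a : ℚ) (k : ℤ) : ℚ :=
  if 0 ≤ k then ∏ m ∈ Finset.range k.toNat, (a + m)
  else 1 / ∏ m ∈ Finset.range (-k).toNat, (a - (m + 1))

/-- The matrix `M(x;b,c)`. -/
def Mmat (x : ℚ) (b c : ℕ) : Matrix (Fin (b + c)) (Fin (b + c)) ℚ := fun i j =>
  if (i : ℕ) < c then
    (if (j : ℕ) < b then gbinom (x + (j : ℕ)) ((i : ℕ) : ℤ)
     else gbinom (2 * x + (j : ℕ)) ((i : ℕ) : ℤ))
  else if (i : ℕ) < b then
    (if (j : ℕ) < c then 0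
     else if (j : ℕ) < b then gbinom (x + (j : ℕ)) ((i : ℕ) : ℤ)
     else gbinom (2 * x + (j : ℕ)) ((i : ℕ) : ℤ))
  else
    (if (j : ℕ) < c then 2 * gbinom (x + (j : ℕ)) (((i : ℕ) : ℤ) - (b : ℤ))
     else if (j : ℕ) < b then gbinom (x + (j : ℕ)) (((i : ℕ) : ℤ) - (b : ℤ))
     else 0)

/-- `Δ(x;b,c)`. -/
def Δdet (x : ℚ) (b c : ℕ) : ℚ := (Mmat x b c).det

/-- The matrix `M'(x;b,c)`; column index `j` of the paper is `c + j'`. -/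
def M'mat (x : ℚ) (b c : ℕ) : Matrix (Fin b) (Fin b) ℚ := fun i j =>
  if c + (j : ℕ) < b then
    gbinom (x + (c : ℕ)) (((i : ℕ) : ℤ) - ((c : ℤ) + (j : ℕ)) + (c : ℤ))
  else if (i : ℕ) < c then
    2 * gbinom (2 * x + (b : ℕ)) (((i : ℕ) : ℤ) - ((c : ℤ) + (j : ℕ)) + (b : ℤ))
  else
    gbinom (2 * x + (b : ℕ)) (((i : ℕ) : ℤ) - ((c : ℤ) + (j : ℕ)) + (b : ℤ))

/-- `Δ'(x;b,c)`. -/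
def Δ'det (x : ℚ) (b c : ℕ) : ℚ := (M'mat x b c).det

lemma gbinom_neg (x : ℚ) {k : ℤ} (hk : k < 0) : gbinom x k = 0 := by
  simp [gbinom, not_le.mpr hk]

lemma gbinom_natCast (x : ℚ) (k : ℕ) :
    gbinom x (k : ℤ) = (∏ m ∈ Finset.range k, (x - m)) / (k.factorial : ℚ) := by
  simp [gbinom]

lemma gbinom_zero (x : ℚ) : gbinom x 0 = 1 := by
  simp [gbinom]

lemma gbinom_succ (x : ℚ) (k : ℕ) :
    gbinom x ((k : ℤ) + 1) = gbinom x k * (x - k) / (k + 1) := by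
  have h1 : ((k : ℤ) + 1) = ((k + 1 : ℕ) : ℤ) := by push_cast; ring
  rw [h1, gbinom_natCast, gbinom_natCast, Finset.prod_range_succ, Nat.factorial_succ]
  have hf : (k.factorial : ℚ) ≠ 0 := by exact_mod_cast k.factorial_ne_zero
  have hk1 : ((k : ℚ) + 1) ≠ 0 := by positivity
  push_cast
  rw [div_mul_eq_mul_div, div_div]
  rw [mul_comm ((k:ℚ) + 1) (k.factorial : ℚ)]

lemma gbinom_nat_of_lt {N k : ℕ} (h : N < k) : gbinom (N : ℚ) k = 0 := by
  rw [gbinom_natCast]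
  rw [Finset.prod_eq_zero (Finset.mem_range.mpr h) (by simp : ((N:ℚ) - (N:ℕ)) = 0)]
  simp

lemma gbinom_nat_eq_choose (N k : ℕ) : gbinom (N : ℚ) k = (N.choose k : ℚ) := by
  induction k with
  | zero => simp [gbinom_zero]
  | succ k ih =>
    rcases le_or_gt (k + 1) N with h | h
    · have h1 : (((k + 1 : ℕ)) : ℤ) = ((k : ℤ) + 1) := by push_cast; ring
      rw [h1, gbinom_succ, ih]
      have hc := Nat.choose_succ_right_eq N k
      have hNk : ((N - k : ℕ) : ℚ) = (N : ℚ) - k := by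
        have hkN : k ≤ N := le_trans (Nat.le_succ k) h
        push_cast [hkN]; ring
      have hcq : (N.choose (k+1) : ℚ) * ((k:ℚ) + 1) = (N.choose k : ℚ) * ((N:ℚ) - k) := by
        rw [← hNk]
        exact_mod_cast congrArg (Nat.cast : ℕ → ℚ) hc
      have hk1 : ((k : ℚ) + 1) ≠ 0 := by positivity
      rw [div_eq_iff hk1]
      linarith [hcq]
    · rw [gbinom_nat_of_lt h, Nat.choose_eq_zero_of_lt h]
      simp

lemma gbinom_nat_ne_zero {N k : ℕ} (h : k ≤ N) : gbinom (N : ℚ) k ≠ 0 := by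
  rw [gbinom_nat_eq_choose]
  exact_mod_cast (Nat.choose_pos h).ne'

lemma gbinom_pascal (x : ℚ) (k : ℤ) :
    gbinom x k = gbinom (x - 1) k + gbinom (x - 1) (k - 1) := by
  rcases lt_trichotomy k 0 with hk | hk | hk
  · rw [gbinom_neg _ hk, gbinom_neg _ hk, gbinom_neg _ (by omega)]; ring
  · subst hk
    rw [gbinom_zero, gbinom_zero, gbinom_neg _ (by norm_num)]; ring
  · obtain ⟨n, rfl⟩ : ∃ n : ℕ, k = (n : ℤ) + 1 := ⟨(k - 1).toNat, by omega⟩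
    have h1 : (n : ℤ) + 1 - 1 = (n : ℤ) := by ring
    rw [h1]
    have hcast : ((n : ℤ) + 1) = ((n + 1 : ℕ) : ℤ) := by push_cast; ring
    have hp : (∏ m ∈ Finset.range (n+1), (x - (m:ℚ))) = x * ∏ m ∈ Finset.range n, (x - 1 - m) := by
      rw [Finset.prod_range_succ']
      rw [mul_comm]
      congr 1
      · norm_num
      · exact Finset.prod_congr rfl (fun m _ => by push_cast; ring)
    have e1 : gbinom x ((n : ℤ) + 1)
        = (x * ∏ m ∈ Finset.range n, (x - 1 - m)) / ((n+1).factorial : ℚ) := by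
      rw [hcast, gbinom_natCast, hp]
    have e2 : gbinom (x-1) ((n : ℤ) + 1)
        = ((∏ m ∈ Finset.range n, (x - 1 - m)) * (x - 1 - n)) / ((n+1).factorial : ℚ) := by
      rw [hcast, gbinom_natCast, Finset.prod_range_succ]
    rw [e1, e2, gbinom_natCast]
    have hf : ((n+1).factorial : ℚ) ≠ 0 := by exact_mod_cast (n+1).factorial_ne_zero
    have hf2 : (n.factorial : ℚ) ≠ 0 := by exact_mod_cast n.factorial_ne_zero
    rw [Nat.factorial_succ]
    push_cast
    field_simp
    ring

lemma gbinom_reflect (w : ℚ) (k : ℕ) :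
    gbinom w k = (-1) ^ k * gbinom ((k : ℚ) - 1 - w) k := by
  rw [gbinom_natCast, gbinom_natCast]
  have hp : (∏ m ∈ Finset.range k, (w - m))
      = (-1)^k * ∏ m ∈ Finset.range k, ((k:ℚ) - 1 - w - m) := by
    rw [← Finset.prod_range_reflect (fun m => w - (m:ℚ)) k]
    have step : ∀ j ∈ Finset.range k, w - ((k - 1 - j : ℕ):ℚ) = (-1) * ((k:ℚ) - 1 - w - j) := by
      intro j hj
      have hj' : j < k := Finset.mem_range.mp hj
      have hc : ((k - 1 - j : ℕ):ℚ) = (k:ℚ) - 1 - j := by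
        rw [Nat.cast_sub (by omega : j ≤ k - 1), Nat.cast_sub (by omega : 1 ≤ k)]
        norm_num
      rw [hc]; ring
    rw [Finset.prod_congr rfl step, Finset.prod_mul_distrib, Finset.prod_const,
      Finset.card_range]
  rw [hp, mul_div_assoc]

lemma gbinom_zero_nat (m : ℕ) (hm : 0 < m) : gbinom ((0:ℕ) : ℚ) m = 0 :=
  gbinom_nat_of_lt hm

lemma vdm_nat (s : ℕ) : ∀ (c : ℕ) (t : ℚ),
    ∑ m ∈ Finset.range (c+1), gbinom (s : ℚ) m * gbinom t ((c:ℤ) - m)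
      = gbinom ((s:ℚ) + t) c := by
  induction s with
  | zero =>
    intro c t
    rw [Finset.sum_eq_single 0]
    · simp [gbinom_zero]
    · intro m hm hm0
      have hlt : (0:ℕ) < m := Nat.pos_of_ne_zero hm0
      rw [gbinom_nat_of_lt (N := 0) hlt, zero_mul]
    · intro h; exact absurd (Finset.mem_range.mpr (Nat.succ_pos c)) h
  | succ s ih =>
    intro c t
    have hcast : ((s+1 : ℕ) : ℚ) = (s:ℚ) + 1 := by push_cast; ring
    have hpas : ∀ m : ℕ, gbinom ((s:ℚ)+1) m = gbinom (s:ℚ) m + gbinom (s:ℚ) ((m:ℤ)-1) := by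
      intro m
      have := gbinom_pascal ((s:ℚ)+1) m
      simpa using this
    rcases Nat.eq_zero_or_pos c with rfl | hc
    · simp [gbinom_zero]
    · obtain ⟨c', rfl⟩ : ∃ c', c = c' + 1 := ⟨c - 1, by omega⟩
      calc ∑ m ∈ Finset.range (c'+1+1), gbinom ((s+1:ℕ) : ℚ) m * gbinom t (((c'+1:ℕ):ℤ) - m)
          = ∑ m ∈ Finset.range (c'+1+1), (gbinom (s:ℚ) m * gbinom t (((c'+1:ℕ):ℤ) - m)
            + gbinom (s:ℚ) ((m:ℤ)-1) * gbinom t (((c'+1:ℕ):ℤ) - m)) := by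
            refine Finset.sum_congr rfl (fun m _ => ?_)
            rw [hcast, hpas m]; ring
        _ = gbinom ((s:ℚ) + t) (((c'+1:ℕ)):ℤ)
            + ∑ m ∈ Finset.range (c'+1+1), gbinom (s:ℚ) ((m:ℤ)-1) * gbinom t (((c'+1:ℕ):ℤ) - m) := by
            rw [Finset.sum_add_distrib, ih (c'+1) t]
        _ = gbinom ((s:ℚ) + t) (((c'+1:ℕ)):ℤ) + gbinom ((s:ℚ) + t) c' := by
            congr 1
            rw [Finset.sum_range_succ']
            have h0 : gbinom (s:ℚ) (((0:ℕ):ℤ)-1) * gbinom t (((c'+1:ℕ):ℤ) - (0:ℕ)) = 0 := by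
              rw [gbinom_neg _ (by norm_num)]; ring
            rw [h0, add_zero]
            have : ∀ m ∈ Finset.range (c'+1),
                gbinom (s:ℚ) (((m+1:ℕ):ℤ)-1) * gbinom t (((c'+1:ℕ):ℤ) - ((m+1:ℕ):ℤ))
                  = gbinom (s:ℚ) m * gbinom t (((c':ℕ):ℤ) - m) := by
              intro m _
              congr 1
              · congr 1; push_cast; ring
              · congr 1; push_cast; ring
            rw [Finset.sum_congr rfl this, ih c' t]
        _ = gbinom ((s:ℚ)+1 + t) (((c'+1:ℕ)):ℤ) := by
            have := gbinom_pascal ((s:ℚ)+1+t) ((c'+1 : ℕ) : ℤ)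
            have h1 : ((s:ℚ)+1+t) - 1 = (s:ℚ) + t := by ring
            have h2 : ((c'+1 : ℕ) : ℤ) - 1 = (c' : ℤ) := by push_cast; ring
            rw [h1, h2] at this
            rw [this]
        _ = gbinom (((s+1:ℕ):ℚ) + t) (((c'+1:ℕ)):ℤ) := by rw [hcast]

noncomputable def gbPoly (k : ℕ) : Polynomial ℚ :=
  Polynomial.C ((k.factorial : ℚ)⁻¹) * ∏ m ∈ Finset.range k, (Polynomial.X - Polynomial.C (m:ℚ))

lemma gbPoly_eval (x : ℚ) (k : ℕ) : (gbPoly k).eval x = gbinom x k := by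
  simp [gbPoly, gbinom_natCast, Polynomial.eval_prod, div_eq_mul_inv, mul_comm]

lemma vdm (s t : ℚ) (c : ℕ) :
    ∑ m ∈ Finset.range (c+1), gbinom s m * gbinom t ((c:ℤ) - m) = gbinom (s + t) c := by
  set p : Polynomial ℚ :=
    ∑ m ∈ Finset.range (c+1), Polynomial.C (gbinom t ((c:ℤ) - m)) * gbPoly m with hp
  set q : Polynomial ℚ := (gbPoly c).comp (Polynomial.X + Polynomial.C t) with hq
  have heval : ∀ u : ℚ, p.eval u = ∑ m ∈ Finset.range (c+1), gbinom u m * gbinom t ((c:ℤ) - m) := by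
    intro u
    rw [hp, Polynomial.eval_finset_sum]
    exact Finset.sum_congr rfl (fun m _ => by
      rw [Polynomial.eval_mul, Polynomial.eval_C, gbPoly_eval]; ring)
  have heval' : ∀ u : ℚ, q.eval u = gbinom (u + t) c := by
    intro u
    rw [hq, Polynomial.eval_comp, Polynomial.eval_add, Polynomial.eval_X, Polynomial.eval_C,
      gbPoly_eval]
  have hpq : p = q := by
    apply Polynomial.eq_of_infinite_eval_eq
    apply Set.Infinite.mono (s := Set.range ((↑) : ℕ → ℚ))
    · rintro _ ⟨n, rfl⟩
      simp only [Set.mem_setOf_eq]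
      rw [heval, heval', vdm_nat]
    · exact Set.infinite_range_of_injective Nat.cast_injective
  have := congrArg (Polynomial.eval s) hpq
  rw [heval, heval'] at this
  exact this

noncomputable def xq (b c : ℕ) : ℚ := (c:ℚ) - (b:ℚ)/2 + 1/2
noncomputable def yq (b : ℕ) : ℚ := ((b:ℚ) - 1)/2
noncomputable def wv (b c : ℕ) (j : ℕ) : ℚ :=
  gbinom ((b - c - 1 : ℕ) : ℚ) j * gbinom (yq b) j / gbinom ((b - 1 : ℕ) : ℚ) j
noncomputable def Gf (b c : ℕ) (K : ℕ) (j : ℕ) : ℚ :=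
  (j:ℚ) * ((b:ℚ) - j) * wv b c j * gbinom (xq b c) ((K:ℤ) + 1 - j)
noncomputable def Sf (b c : ℕ) (K : ℕ) : ℚ :=
  ∑ j ∈ Finset.range (b - c), wv b c j * gbinom (xq b c) ((K:ℤ) - j)

lemma cast_bc1 {b c : ℕ} (hb : c + 2 ≤ b) : ((b - c - 1 : ℕ) : ℚ) = (b:ℚ) - c - 1 := by
  rw [Nat.cast_sub (show 1 ≤ b - c by omega), Nat.cast_sub (show c ≤ b by omega)]; norm_num

lemma cast_b1 {b : ℕ} (hb : 1 ≤ b) : ((b - 1 : ℕ) : ℚ) = (b:ℚ) - 1 := by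
  rw [Nat.cast_sub hb]; norm_num

lemma cert (b c : ℕ) (hb : c + 2 ≤ b) (hc : 2 ≤ c) (K j : ℕ) (hj : j < b - c) :
    ((K:ℚ)+1)*((K:ℚ)+1-(b:ℚ)) * (wv b c j * gbinom (xq b c) ((K:ℤ)+1-(j:ℤ)))
      + ((K:ℚ)-(c:ℚ))*((K:ℚ)-yq b) * (wv b c j * gbinom (xq b c) ((K:ℤ)-(j:ℤ)))
    = Gf b c K (j+1) - Gf b c K j := by
  have hb1 : (1:ℕ) ≤ b := by omega
  rcases le_or_gt j K with hjK | hKj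
  · -- j ≤ K
    obtain ⟨r, rfl⟩ : ∃ r : ℕ, K = j + r := ⟨K - j, by omega⟩
    simp only [wv, Gf, xq, yq]
    rw [show (((j+r : ℕ)):ℤ) + 1 - (j:ℤ) = ((r:ℕ):ℤ) + 1 by push_cast; ring,
        show (((j+r : ℕ)):ℤ) - (j:ℤ) = ((r:ℕ):ℤ) by push_cast; ring,
        show (((j+r : ℕ)):ℤ) + 1 - ((j+1 : ℕ):ℤ) = ((r:ℕ):ℤ) by push_cast; ring,
        show (((j+1 : ℕ)):ℤ) = (j:ℤ) + 1 by push_cast; ring,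
        gbinom_succ, gbinom_succ, gbinom_succ, gbinom_succ]
    have hz0 : gbinom ((b-1:ℕ):ℚ) (j:ℤ) ≠ 0 := gbinom_nat_ne_zero (by omega)
    rw [cast_bc1 hb, cast_b1 hb1] at *
    have h1 : (j:ℚ) + 1 ≠ 0 := by positivity
    have h3 : (r:ℚ) + 1 ≠ 0 := by positivity
    have h2 : ((b:ℚ)-1) - (j:ℚ) ≠ 0 := by
      have : (j:ℚ) + 2 ≤ (b:ℚ) := by exact_mod_cast (show j + 2 ≤ b by omega)
      intro hcon; nlinarith
    push_cast
    field_simp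
    ring
  · rcases (show j = K + 1 ∨ K + 1 < j by omega) with rfl | hlt
    · -- j = K+1
      simp only [wv, Gf, xq, yq]
      rw [show ((K:ℕ):ℤ) + 1 - ((K+1 : ℕ):ℤ) = 0 by push_cast; ring,
          show ((K:ℕ):ℤ) - ((K+1 : ℕ):ℤ) = -1 by push_cast; ring,
          show ((K:ℕ):ℤ) + 1 - ((K+1+1 : ℕ):ℤ) = -1 by push_cast; ring,
          gbinom_zero, gbinom_neg _ (show (-1:ℤ) < 0 by norm_num)]
      push_cast
      ring
    · -- K + 1 < j
      simp only [wv, Gf, xq, yq]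
      rw [gbinom_neg _ (show ((K:ℕ):ℤ) + 1 - ((j+1 : ℕ):ℤ) < 0 by push_cast; omega),
          gbinom_neg _ (show ((K:ℕ):ℤ) + 1 - ((j : ℕ):ℤ) < 0 by push_cast; omega),
          gbinom_neg _ (show ((K:ℕ):ℤ) - ((j : ℕ):ℤ) < 0 by push_cast; omega)]
      ring

lemma wv_top (b c : ℕ) (hb : c + 2 ≤ b) : wv b c (b - c) = 0 := by
  have : gbinom ((b - c - 1 : ℕ) : ℚ) (((b - c : ℕ)) : ℤ) = 0 :=
    gbinom_nat_of_lt (show b - c - 1 < b - c by omega)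
  simp [wv, this]

lemma recur (b c : ℕ) (hb : c + 2 ≤ b) (hc : 2 ≤ c) (K : ℕ) :
    ((K:ℚ)+1)*((K:ℚ)+1-(b:ℚ)) * Sf b c (K+1)
      + ((K:ℚ)-(c:ℚ))*((K:ℚ)-yq b) * Sf b c K = 0 := by
  have hsum : ∑ j ∈ Finset.range (b - c),
      (((K:ℚ)+1)*((K:ℚ)+1-(b:ℚ)) * (wv b c j * gbinom (xq b c) ((K:ℤ)+1-(j:ℤ)))
        + ((K:ℚ)-(c:ℚ))*((K:ℚ)-yq b) * (wv b c j * gbinom (xq b c) ((K:ℤ)-(j:ℤ))))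
      = ∑ j ∈ Finset.range (b - c), (Gf b c K (j+1) - Gf b c K j) :=
    Finset.sum_congr rfl (fun j hj => cert b c hb hc K j (Finset.mem_range.mp hj))
  rw [Finset.sum_range_sub (Gf b c K)] at hsum
  have hG0 : Gf b c K 0 = 0 := by simp [Gf]
  have hGn : Gf b c K (b - c) = 0 := by simp [Gf, wv_top b c hb]
  rw [hG0, hGn, sub_zero] at hsum
  have hS1 : ∑ j ∈ Finset.range (b - c),
      ((K:ℚ)+1)*((K:ℚ)+1-(b:ℚ)) * (wv b c j * gbinom (xq b c) ((K:ℤ)+1-(j:ℤ)))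
      = ((K:ℚ)+1)*((K:ℚ)+1-(b:ℚ)) * Sf b c (K+1) := by
    rw [Sf, Finset.mul_sum]
    refine Finset.sum_congr rfl (fun j hj => ?_)
    rw [show (((K+1 : ℕ)):ℤ) - (j:ℤ) = (K:ℤ) + 1 - j by push_cast; ring]
  have hS2 : ∑ j ∈ Finset.range (b - c),
      ((K:ℚ)-(c:ℚ))*((K:ℚ)-yq b) * (wv b c j * gbinom (xq b c) ((K:ℤ)-(j:ℤ)))
      = ((K:ℚ)-(c:ℚ))*((K:ℚ)-yq b) * Sf b c K := by
    rw [Sf, Finset.mul_sum]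
  rw [Finset.sum_add_distrib, hS1, hS2] at hsum
  exact hsum

lemma S_window (b c : ℕ) (hb : c + 2 ≤ b) (hc : 2 ≤ c) :
    ∀ K, c + 1 ≤ K → K ≤ b - 1 → Sf b c K = 0 := by
  intro K hK1 hK2
  induction K, hK1 using Nat.le_induction with
  | base =>
    have h := recur b c hb hc c
    have hz : ((c:ℚ)-(c:ℚ)) * ((c:ℚ) - yq b) = 0 := by ring
    rw [show ((c:ℚ)-(c:ℚ))*((c:ℚ)-yq b) * Sf b c c
        = (((c:ℚ)-(c:ℚ)) * ((c:ℚ) - yq b)) * Sf b c c by ring, hz, zero_mul, add_zero] at h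
    have hne : ((c:ℚ)+1)*((c:ℚ)+1-(b:ℚ)) ≠ 0 := by
      have hlt : (c:ℚ) + 2 ≤ (b:ℚ) := by exact_mod_cast hb
      have : (c:ℚ)+1-(b:ℚ) ≠ 0 := by intro hcon; nlinarith
      positivity
    exact (mul_eq_zero.mp h).resolve_left hne
  | succ K hK ih =>
    have hKb : K ≤ b - 1 := by omega
    have h0 : Sf b c K = 0 := ih hKb
    have h := recur b c hb hc K
    rw [h0, mul_zero, add_zero] at h
    have hne : ((K:ℚ)+1)*((K:ℚ)+1-(b:ℚ)) ≠ 0 := by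
      have hlt : (K:ℚ) + 2 ≤ (b:ℚ) := by exact_mod_cast (show K + 2 ≤ b by omega)
      have h1 : (K:ℚ)+1-(b:ℚ) ≠ 0 := by intro hcon; nlinarith
      positivity
    exact (mul_eq_zero.mp h).resolve_left hne

lemma S_zero (b c : ℕ) (hb : c + 2 ≤ b) : Sf b c 0 = 1 := by
  rw [Sf, Finset.sum_eq_single 0]
  · simp [wv, gbinom_zero]
  · intro j hj hj0
    have : ((0:ℕ):ℤ) - (j:ℤ) < 0 := by
      have : 0 < j := Nat.pos_of_ne_zero hj0
      omega
    rw [gbinom_neg _ this, mul_zero]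
  · intro h
    exact absurd (Finset.mem_range.mpr (by omega : 0 < b - c)) h

noncomputable def sigf (b c : ℕ) (m : ℕ) : ℚ :=
  gbinom (c:ℚ) m * gbinom (yq b) m / gbinom ((b - 1 : ℕ) : ℚ) m

lemma S_low (b c : ℕ) (hb : c + 2 ≤ b) (hc : 2 ≤ c) :
    ∀ m, m < c → Sf b c m = sigf b c m := by
  intro m hm
  induction m with
  | zero =>
    rw [S_zero b c hb]
    simp [sigf, gbinom_zero]
  | succ m ih =>
    have hmc : m < c := by omega
    have hS := recur b c hb hc m
    rw [ih hmc] at hS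
    -- sig satisfies same recurrence
    have hsig : ((m:ℚ)+1)*((m:ℚ)+1-(b:ℚ)) * sigf b c (m+1)
        + ((m:ℚ)-(c:ℚ))*((m:ℚ)-yq b) * sigf b c m = 0 := by
      simp only [sigf, yq]
      rw [show (((m+1 : ℕ)):ℤ) = (m:ℤ) + 1 by push_cast; ring,
          gbinom_succ, gbinom_succ, gbinom_succ]
      have hz0 : gbinom ((b-1:ℕ):ℚ) (m:ℤ) ≠ 0 := gbinom_nat_ne_zero (by omega)
      rw [cast_b1 (show 1 ≤ b by omega)] at *
      have h1 : (m:ℚ) + 1 ≠ 0 := by positivity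
      have h2 : ((b:ℚ)-1) - (m:ℚ) ≠ 0 := by
        have : (m:ℚ) + 2 ≤ (b:ℚ) := by exact_mod_cast (show m + 2 ≤ b by omega)
        intro hcon; nlinarith
      field_simp
      ring
    have hne : ((m:ℚ)+1)*((m:ℚ)+1-(b:ℚ)) ≠ 0 := by
      have hlt : (m:ℚ) + 2 ≤ (b:ℚ) := by exact_mod_cast (show m + 2 ≤ b by omega)
      have h1 : (m:ℚ)+1-(b:ℚ) ≠ 0 := by intro hcon; nlinarith
      positivity
    have := sub_eq_zero.mpr (hS.trans hsig.symm)
    have hfac : ((m:ℚ)+1)*((m:ℚ)+1-(b:ℚ)) * (Sf b c (m+1) - sigf b c (m+1)) = 0 := by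
      linarith [hS, hsig]
    rcases mul_eq_zero.mp hfac with h | h
    · exact absurd h hne
    · linarith [sub_eq_zero.mp h]

lemma alt_lemma (x : ℚ) (j : ℕ) : ∀ (c : ℕ),
    gbinom (x-1) ((c:ℤ) - 1 - j) = ∑ m ∈ Finset.range c, (-1:ℚ)^(c+1+m) * gbinom x ((m:ℤ) - j) := by
  intro c
  induction c with
  | zero =>
    rw [gbinom_neg _ (show ((0:ℕ):ℤ) - 1 - (j:ℤ) < 0 by omega)]
    simp
  | succ c ih =>
    rw [Finset.sum_range_succ]
    have hsgn : ∀ m : ℕ, (-1:ℚ)^(c+1+1+m) = (-1:ℚ)^(c+1+m) * (-1) := by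
      intro m
      rw [show c+1+1+m = (c+1+m)+1 by ring, pow_succ]
    have hlast : (-1:ℚ)^(c+1+1+c) = 1 := Even.neg_one_pow ⟨c+1, by ring⟩
    have hneg : ∑ m ∈ Finset.range c, (-1:ℚ)^(c+1+1+m) * gbinom x ((m:ℤ) - j)
        = -(∑ m ∈ Finset.range c, (-1:ℚ)^(c+1+m) * gbinom x ((m:ℤ) - j)) := by
      rw [← Finset.sum_neg_distrib]
      exact Finset.sum_congr rfl (fun m _ => by rw [hsgn m]; ring)
    rw [hneg, hlast, one_mul, ← ih]
    have hp := gbinom_pascal x ((c:ℤ) - j)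
    rw [show ((c:ℤ) - j) - 1 = (c:ℤ) - 1 - j by ring] at hp
    rw [show (((c+1:ℕ)):ℤ) - 1 - (j:ℤ) = (c:ℤ) - j by push_cast; ring]
    linarith [hp]

lemma per_term (b c m : ℕ) (hb : c + 2 ≤ b) (hceven : Even c) (hm : m < c) :
    (-1:ℚ)^m * sigf b c m
      = gbinom (yq b) m * gbinom ((c:ℚ)-(b:ℚ)) (((c - m:ℕ)):ℤ) / gbinom ((b-1:ℕ):ℚ) (((c:ℕ)):ℤ) := by
  have hZm : gbinom ((b-1:ℕ):ℚ) (m:ℤ) ≠ 0 := gbinom_nat_ne_zero (by omega)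
  have hZc : gbinom ((b-1:ℕ):ℚ) (((c:ℕ)):ℤ) ≠ 0 := gbinom_nat_ne_zero (by omega)
  have key : gbinom (c:ℚ) m * gbinom ((b-1:ℕ):ℚ) (((c:ℕ)):ℤ)
      = gbinom ((b-1:ℕ):ℚ) m * gbinom (((b-1-m:ℕ)):ℚ) (((c - m:ℕ)):ℤ) := by
    rw [gbinom_nat_eq_choose, gbinom_nat_eq_choose, gbinom_nat_eq_choose, gbinom_nat_eq_choose]
    have hnat := Nat.choose_mul (n := b - 1) (le_of_lt hm)
    have hnat' : c.choose m * (b-1).choose c = (b-1).choose m * (b-1-m).choose (c-m) := by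
      rw [mul_comm]; exact hnat
    exact_mod_cast congrArg (Nat.cast : ℕ → ℚ) hnat'
  have hrefl : gbinom ((c:ℚ)-(b:ℚ)) (((c - m:ℕ)):ℤ)
      = (-1:ℚ)^(c-m) * gbinom (((b-1-m:ℕ)):ℚ) (((c - m:ℕ)):ℤ) := by
    rw [gbinom_reflect ((c:ℚ)-(b:ℚ)) (c-m)]
    congr 2
    rw [Nat.cast_sub (le_of_lt hm), Nat.cast_sub (show m ≤ b - 1 by omega),
      Nat.cast_sub (show 1 ≤ b by omega)]
    push_cast
    ring
  have heq : (-1:ℚ)^(c-m) = (-1:ℚ)^m := by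
    have h1 : (-1:ℚ)^(c-m) * (-1:ℚ)^m = 1 := by
      rw [← pow_add, show c - m + m = c by omega]
      exact Even.neg_one_pow hceven
    have h2 : (-1:ℚ)^m * (-1:ℚ)^m = 1 := by
      rw [← pow_add]
      exact Even.neg_one_pow ⟨m, by ring⟩
    calc (-1:ℚ)^(c-m) = (-1:ℚ)^(c-m) * ((-1:ℚ)^m * (-1:ℚ)^m) := by rw [h2, mul_one]
      _ = ((-1:ℚ)^(c-m) * (-1:ℚ)^m) * (-1:ℚ)^m := by ring
      _ = (-1:ℚ)^m := by rw [h1, one_mul]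
  rw [sigf, hrefl, heq]
  field_simp
  linear_combination gbinom (yq b) (m:ℤ) * key

lemma fin_sum (b c : ℕ) (hb : c + 2 ≤ b) (hc : 2 ≤ c) (hceven : Even c) :
    ∑ m ∈ Finset.range c, (-1:ℚ)^m * sigf b c m = 0 := by
  have hstep : ∀ m ∈ Finset.range c, (-1:ℚ)^m * sigf b c m
      = gbinom (yq b) m * gbinom ((c:ℚ)-(b:ℚ)) ((c:ℤ) - m) / gbinom ((b-1:ℕ):ℚ) (((c:ℕ)):ℤ) := by
    intro m hm
    have hmc := Finset.mem_range.mp hm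
    rw [per_term b c m hb hceven hmc,
      show (((c - m:ℕ)):ℤ) = (c:ℤ) - m by rw [Nat.cast_sub (le_of_lt hmc)]]
  rw [Finset.sum_congr rfl hstep, ← Finset.sum_div]
  have hsum : ∑ m ∈ Finset.range c, gbinom (yq b) m * gbinom ((c:ℚ)-(b:ℚ)) ((c:ℤ) - m)
      = gbinom (yq b + ((c:ℚ)-(b:ℚ))) c - gbinom (yq b) c := by
    have hfull := vdm (yq b) ((c:ℚ)-(b:ℚ)) c
    rw [Finset.sum_range_succ] at hfull
    rw [show (c:ℤ) - (c:ℤ) = 0 by ring, gbinom_zero, mul_one] at hfull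
    linarith [hfull]
  have hrefl : gbinom (yq b + ((c:ℚ)-(b:ℚ))) c = gbinom (yq b) c := by
    rw [gbinom_reflect (yq b + ((c:ℚ)-(b:ℚ))) c]
    rw [Even.neg_one_pow hceven, one_mul]
    congr 1
    simp only [yq]
    ring
  rw [hsum, hrefl, sub_self, zero_div]

lemma T_zero (b c : ℕ) (hb : c + 2 ≤ b) (hc : 2 ≤ c) (hceven : Even c) :
    ∑ j ∈ Finset.range (b - c), wv b c j * gbinom (xq b c - 1) ((c:ℤ) - 1 - j) = 0 := by
  have h1 : ∀ j ∈ Finset.range (b - c),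
      wv b c j * gbinom (xq b c - 1) ((c:ℤ) - 1 - j)
        = ∑ m ∈ Finset.range c, (-1:ℚ)^(c+1+m) * (wv b c j * gbinom (xq b c) ((m:ℤ) - j)) := by
    intro j _
    rw [alt_lemma (xq b c) j c, Finset.mul_sum]
    exact Finset.sum_congr rfl (fun m _ => by ring)
  rw [Finset.sum_congr rfl h1, Finset.sum_comm]
  have h2 : ∀ m ∈ Finset.range c,
      ∑ j ∈ Finset.range (b - c), (-1:ℚ)^(c+1+m) * (wv b c j * gbinom (xq b c) ((m:ℤ) - j))
        = (-1:ℚ)^(c+1+m) * sigf b c m := by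
    intro m hm
    rw [← Finset.mul_sum]
    congr 1
    exact (S_low b c hb hc m (Finset.mem_range.mp hm) : Sf b c m = sigf b c m)
  rw [Finset.sum_congr rfl h2]
  have h3 : ∀ m ∈ Finset.range c,
      (-1:ℚ)^(c+1+m) * sigf b c m = -(((-1:ℚ)^m) * sigf b c m) := by
    intro m _
    have : (-1:ℚ)^(c+1+m) = -((-1:ℚ)^m) := by
      rw [pow_add, pow_add, Even.neg_one_pow hceven]
      ring
    rw [this]; ring
  rw [Finset.sum_congr rfl h3, Finset.sum_neg_distrib, fin_sum b c hb hc hceven, neg_zero]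

/-- Lemma 4: the determinant (3.76) vanishes.  Rows and columns are indexed by
`c ≤ i,j < b`, realized as `i = c + i'`, `j = c + j'` with `i', j' : Fin (b-c)`. -/
theorem lemma4 (b c : ℕ) (hb : Even b) (hc : Even c) (hcb : c < b) :
    Matrix.det (fun i j : Fin (b - c) =>
        if (i : ℕ) = 0 then
          gbinom ((c : ℚ) - (b : ℚ) / 2 - 1 / 2)
            (2 * (c : ℤ) - 1 - ((c : ℤ) + (j : ℕ)))
        else
          gbinom ((c : ℚ) - (b : ℚ) / 2 + 1 / 2)
            (((c : ℤ) + (i : ℕ)) - ((c : ℤ) + (j : ℕ)) + (c : ℤ))) = 0 := by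
  have hn : 0 < b - c := by omega
  rcases Nat.eq_zero_or_pos c with rfl | hcpos
  · -- c = 0 : the first row is identically zero
    apply Matrix.det_eq_zero_of_row_eq_zero ⟨0, hn⟩
    intro j
    simp only [Fin.val_mk, if_pos rfl]
    apply gbinom_neg
    have : (0:ℤ) ≤ ((j:ℕ):ℤ) := Int.ofNat_nonneg _
    omega
  · have hc2 : 2 ≤ c := by
      obtain ⟨q, hq⟩ := hc; omega
    have hbc2 : c + 2 ≤ b := by
      obtain ⟨p, hp⟩ := hb; obtain ⟨q, hq⟩ := hc; omega
    apply Matrix.exists_mulVec_eq_zero_iff.mp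
    refine ⟨fun j : Fin (b - c) => wv b c (j : ℕ), ?_, ?_⟩
    · intro hzero
      have h0 := congrFun hzero ⟨0, hn⟩
      have : wv b c 0 = 1 := by
        simp [wv, gbinom_zero]
      rw [Pi.zero_apply] at h0
      simp only [Fin.val_mk] at h0
      rw [this] at h0
      exact one_ne_zero h0
    · funext i
      simp only [Matrix.mulVec, dotProduct]
      rw [Pi.zero_apply]
      by_cases hi : (i : ℕ) = 0
      · simp only [hi, if_pos]
        have := T_zero b c hbc2 hc2 hc
        rw [← this, ← Fin.sum_univ_eq_sum_range
          (fun j => wv b c j * gbinom (xq b c - 1) ((c:ℤ) - 1 - j))]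
        refine Finset.sum_congr rfl (fun j _ => ?_)
        rw [show (2 * (c : ℤ) - 1 - ((c : ℤ) + (j : ℕ))) = (c:ℤ) - 1 - (j:ℕ) by ring,
            show ((c : ℚ) - (b : ℚ) / 2 - 1 / 2) = xq b c - 1 by rw [xq]; ring]
        ring
      · simp only [hi, if_neg, ite_false]
        have hi1 : 1 ≤ (i : ℕ) := Nat.pos_of_ne_zero hi
        have hi2 : (i : ℕ) ≤ b - c - 1 := by omega
        have hwin := S_window b c hbc2 hc2 (c + (i : ℕ)) (by omega) (by omega)
        rw [Sf] at hwin
        rw [← hwin, ← Fin.sum_univ_eq_sum_range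
          (fun j => wv b c j * gbinom (xq b c) (((c + (i:ℕ) : ℕ):ℤ) - j))]
        refine Finset.sum_congr rfl (fun j _ => ?_)
        rw [show (((c : ℤ) + (i : ℕ)) - ((c : ℤ) + (j : ℕ)) + (c : ℤ))
              = ((c + (i:ℕ) : ℕ):ℤ) - (j:ℕ) by push_cast; ring,
            show ((c : ℚ) - (b : ℚ) / 2 + 1 / 2) = xq b c by rw [xq]]
        ring
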